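/- arXiv:2504.21762 — 2 statements merged into one kernel-verified Lean document; each statement's English description precedes it below -/
import Mathlib

section
/- Let Γ be a quasi-Fuchsian group with limit circle Λ, let c > 0, and let K₁, K₂ ⊆ O₊(Λ) be compact subsets. Then the set {γ ∈ Γ : there exist x ∈ K₁ and y ∈ K₂ with q(γ·x, y) ≥ −c} is finite; equivalently, q(γ·x, y) < −c for all x ∈ K₁, y ∈ K₂ and all γ ∈ Γ outside a finite subset. -/
noncomputable section

/-- The bilinear form `q(x,y) = -x₁y₁ - x₂y₂ + x₃y₃ + x₄y₄` on `ℝ⁴`. -/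
def qf (x y : Fin 4 → ℝ) : ℝ := -(x 0 * y 0) - x 1 * y 1 + x 2 * y 2 + x 3 * y 3

/-- The identification `ℂ × ℂ ≅ ℝ⁴`, `(w, z) ↦ (Re w, Im w, Re z, Im z)`. -/
def toR4 (p : ℂ × ℂ) : Fin 4 → ℝ := ![p.1.re, p.1.im, p.2.re, p.2.im]

/-- An acausal circle: the graph `{(F(z), z) : z ∈ S¹}` of a distance-decreasing map
`F : S¹ → S¹`, viewed inside `ℝ⁴`. -/
def IsAcausalCircle (Λ : Set (Fin 4 → ℝ)) : Prop :=
  ∃ F : ℂ → ℂ,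
    (∀ z : ℂ, ‖z‖ = 1 → ‖F z‖ = 1) ∧
    (∀ z z' : ℂ, ‖z‖ = 1 → ‖z'‖ = 1 → z ≠ z' →
      ‖F z - F z'‖ < ‖z - z'‖) ∧
    Λ = {x | ∃ z : ℂ, ‖z‖ = 1 ∧ x = toR4 (F z, z)}

/-- The invisible domain `O₊(Λ) = {x ∈ AdS₃ : q(x,ν) < 0 for all ν ∈ Λ}`. -/
def invisible (Λ : Set (Fin 4 → ℝ)) : Set (Fin 4 → ℝ) :=
  {x | qf x x = -1 ∧ ∀ ν ∈ Λ, qf x ν < 0}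

/-- The group of linear automorphisms of `ℝ⁴`. -/
abbrev GL4 := (Fin 4 → ℝ) ≃ₗ[ℝ] (Fin 4 → ℝ)

/-- A linear automorphism preserves the bilinear form `q`. -/
def PreservesQ (γ : GL4) : Prop := ∀ u w : Fin 4 → ℝ, qf (γ u) (γ w) = qf u w

/-- The positive cone over a set `Λ ⊆ ℝ⁴`. -/
def qcone (Λ : Set (Fin 4 → ℝ)) : Set (Fin 4 → ℝ) :=
  {x | ∃ lam : ℝ, 0 < lam ∧ ∃ ν ∈ Λ, x = lam • ν}

/-- The convex hull `C(Λ) ⊆ AdS₃` of an acausal circle `Λ`: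
`{x/√(-q(x)) : x ∈ convexHull(Λ), q(x) < 0}`. -/
def convexCore (Λ : Set (Fin 4 → ℝ)) : Set (Fin 4 → ℝ) :=
  {y | ∃ x ∈ convexHull ℝ Λ, qf x x < 0 ∧ y = (Real.sqrt (-(qf x x)))⁻¹ • x}

/-- A subgroup `Γ` of the linear automorphisms of `ℝ⁴` preserving `q` is quasi-Fuchsian
with limit circle `Λ` if `Λ` is an acausal circle whose positive cone is `Γ`-invariant and
the action of `Γ` on the convex hull `C(Λ)` is free, properly discontinuous and
cocompact. -/
def IsQuasiFuchsian (Γ : Subgroup GL4) (Λ : Set (Fin 4 → ℝ)) : Prop :=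
  IsAcausalCircle Λ ∧
  (∀ γ ∈ Γ, PreservesQ γ) ∧
  (∀ γ ∈ Γ, (⇑γ) '' qcone Λ = qcone Λ) ∧
  (∀ γ ∈ Γ, ∀ x ∈ convexCore Λ, γ x = x → γ = 1) ∧
  (∀ K L : Set (Fin 4 → ℝ), K ⊆ convexCore Λ → L ⊆ convexCore Λ →
    IsCompact K → IsCompact L →
    {γ : GL4 | γ ∈ Γ ∧ (((⇑γ) '' K) ∩ L).Nonempty}.Finite) ∧
  (∃ L₀ : Set (Fin 4 → ℝ), L₀ ⊆ convexCore Λ ∧ IsCompact L₀ ∧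
    (⋃ γ ∈ Γ, (⇑γ) '' L₀) = convexCore Λ)


/-! ### Auxiliary lemmas -/

section Aux

lemma qf_comm (x y : Fin 4 → ℝ) : qf x y = qf y x := by unfold qf; ring

lemma qf_smul_left (t : ℝ) (x y : Fin 4 → ℝ) : qf (t • x) y = t * qf x y := by
  simp only [qf, Pi.smul_apply, smul_eq_mul]; ring

lemma qf_smul_right (t : ℝ) (x y : Fin 4 → ℝ) : qf x (t • y) = t * qf x y := by
  simp only [qf, Pi.smul_apply, smul_eq_mul]; ring

lemma qf_add_left (x x' y : Fin 4 → ℝ) : qf (x + x') y = qf x y + qf x' y := by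
  simp only [qf, Pi.add_apply]; ring

lemma qf_add_right (x y y' : Fin 4 → ℝ) : qf x (y + y') = qf x y + qf x y' := by
  simp only [qf, Pi.add_apply]; ring

lemma qf_continuous : Continuous (fun p : (Fin 4 → ℝ) × (Fin 4 → ℝ) => qf p.1 p.2) := by
  unfold qf; fun_prop

lemma qf_self_continuous : Continuous (fun x : Fin 4 → ℝ => qf x x) := by
  unfold qf; fun_prop

lemma abs_qf_le (x y : Fin 4 → ℝ) : |qf x y| ≤ 4 * ‖x‖ * ‖y‖ := by
  have hi : ∀ i : Fin 4, |x i * y i| ≤ ‖x‖ * ‖y‖ := by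
    intro i
    rw [abs_mul]
    have hx := norm_le_pi_norm x i
    have hy := norm_le_pi_norm y i
    rw [Real.norm_eq_abs] at hx hy
    exact mul_le_mul hx hy (abs_nonneg _) (norm_nonneg _)
  have h0 := abs_le.mp (hi 0)
  have h1 := abs_le.mp (hi 1)
  have h2 := abs_le.mp (hi 2)
  have h3 := abs_le.mp (hi 3)
  rw [abs_le]; unfold qf
  constructor <;> [nlinarith [h0.1, h1.1, h2.1, h3.1]; nlinarith [h0.2, h1.2, h2.2, h3.2]]

lemma neg_le_mul_of_bounds {u v m : ℝ} (h1 : -m ≤ u) (h2 : u ≤ m) (h3 : -1 ≤ v) (h4 : v ≤ 1) :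
    -m ≤ u * v := by nlinarith

lemma sum_dite_fin {M : Type*} [AddCommMonoid M] {n N : ℕ} (h : n ≤ N) (f : Fin n → M) :
    ∑ i : Fin N, (if h' : (i : ℕ) < n then f ⟨i, h'⟩ else 0) = ∑ j : Fin n, f j := by
  rw [← Finset.sum_subset (Finset.subset_univ ((Finset.univ : Finset (Fin n)).map (Fin.castLEEmb h)))]
  · rw [Finset.sum_map]
    apply Finset.sum_congr rfl
    intro j _
    rw [dif_pos (by simpa using j.isLt)]
    exact congrArg f (Fin.ext rfl)
  · intro i _ hi
    rw [dif_neg]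
    intro hlt
    exact hi (by simp [Finset.mem_map, Fin.castLEEmb]; exact ⟨⟨i, hlt⟩, rfl⟩)

lemma isCompact_hull {s : Set (Fin 4 → ℝ)} (hs : IsCompact s) : IsCompact (convexHull ℝ s) := by
  rcases s.eq_empty_or_nonempty with rfl | ⟨ν₀, hν₀⟩
  · simp only [convexHull_empty]; exact isCompact_empty
  · set g : (Fin 5 → ℝ) × (Fin 5 → (Fin 4 → ℝ)) → (Fin 4 → ℝ) :=
      fun p => ∑ i : Fin 5, p.1 i • p.2 i with hg
    have hgc : Continuous g := by
      apply continuous_finset_sum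
      intro i _
      exact ((continuous_apply i).comp continuous_fst).smul
        ((continuous_apply i).comp continuous_snd)
    have hA : IsCompact ((stdSimplex ℝ (Fin 5)) ×ˢ (Set.univ.pi fun _ : Fin 5 => s)) :=
      (isCompact_stdSimplex ℝ (Fin 5)).prod (isCompact_univ_pi fun _ => hs)
    have key : convexHull ℝ s = g '' ((stdSimplex ℝ (Fin 5)) ×ˢ (Set.univ.pi fun _ : Fin 5 => s)) := by
      apply Set.Subset.antisymm
      · intro x hx
        rw [convexHull_eq_union] at hx
        simp only [Set.mem_iUnion] at hx
        obtain ⟨t, hts, hai, hxt⟩ := hx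
        have hcard : t.card ≤ 5 := by
          have h1 := hai.card_le_finrank_succ
          rw [Fintype.card_coe] at h1
          have h2 : Module.finrank ℝ ↥(vectorSpan ℝ (Set.range ((↑) : t → (Fin 4 → ℝ)))) ≤ 4 := by
            have := Submodule.finrank_le (vectorSpan ℝ (Set.range ((↑) : t → (Fin 4 → ℝ))))
            simpa using this
          omega
        rw [Finset.convexHull_eq] at hxt
        obtain ⟨w, hw0, hw1, hwx⟩ := hxt
        rw [Finset.centerMass_eq_of_sum_1 _ _ hw1] at hwx
        let e := t.equivFin
        refine ⟨(fun i : Fin 5 => if h : (i : ℕ) < t.card then w (e.symm ⟨i, h⟩) else 0,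
                 fun i : Fin 5 => if h : (i : ℕ) < t.card then (e.symm ⟨i, h⟩ : Fin 4 → ℝ) else ν₀),
          ⟨⟨fun i => ?_, ?_⟩, fun i _ => ?_⟩, ?_⟩
        · dsimp only
          split
          · exact hw0 _ (Finset.coe_mem _)
          · exact le_refl 0
        · dsimp only
          calc ∑ i : Fin 5, (if h : (i : ℕ) < t.card then w (e.symm ⟨i, h⟩) else 0)
              = ∑ j : Fin t.card, w (e.symm j) := sum_dite_fin hcard (fun j => w (e.symm j))
            _ = ∑ v : t, w v := Equiv.sum_comp e.symm (fun v => w v)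
            _ = ∑ v ∈ t, w v := Finset.sum_coe_sort t w
            _ = 1 := hw1
        · dsimp only
          split
          · exact hts (Finset.coe_mem _)
          · exact hν₀
        · show ∑ i : Fin 5, (if h : (i : ℕ) < t.card then w (e.symm ⟨i, h⟩) else 0) •
              (if h : (i : ℕ) < t.card then (e.symm ⟨i, h⟩ : Fin 4 → ℝ) else ν₀) = x
          have : ∀ i : Fin 5, (if h : (i : ℕ) < t.card then w (e.symm ⟨i, h⟩) else 0) •
              (if h : (i : ℕ) < t.card then (e.symm ⟨i, h⟩ : Fin 4 → ℝ) else ν₀)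
              = (if h : (i : ℕ) < t.card then w (e.symm ⟨i, h⟩) • (e.symm ⟨i, h⟩ : Fin 4 → ℝ) else 0) := by
            intro i; split <;> simp
          rw [Finset.sum_congr rfl (fun i _ => this i)]
          calc ∑ i : Fin 5, (if h : (i : ℕ) < t.card then w (e.symm ⟨i, h⟩) • (e.symm ⟨i, h⟩ : Fin 4 → ℝ) else 0)
              = ∑ j : Fin t.card, w (e.symm j) • (e.symm j : Fin 4 → ℝ) :=
                sum_dite_fin hcard (fun j => w (e.symm j) • (e.symm j : Fin 4 → ℝ))
            _ = ∑ v : t, w v • (v : Fin 4 → ℝ) := Equiv.sum_comp e.symm (fun v : t => w v • (v : Fin 4 → ℝ))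
            _ = ∑ v ∈ t, w v • v := Finset.sum_coe_sort t (fun v => w v • v)
            _ = x := hwx
      · rintro x ⟨⟨tt, ff⟩, ⟨⟨ht0, ht1⟩, hf⟩, rfl⟩
        apply Convex.sum_mem (convex_convexHull ℝ s)
        · intro i _; exact ht0 i
        · exact ht1
        · intro i _
          exact subset_convexHull ℝ s (hf i (Set.mem_univ i))
    rw [key]
    exact hA.image hgc

lemma sep_compact {K Λ : Set (Fin 4 → ℝ)} (hKc : IsCompact K) (hKne : K.Nonempty)
    (hΛc : IsCompact Λ) (hΛne : Λ.Nonempty)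
    (hneg : ∀ x ∈ K, ∀ ν ∈ Λ, qf x ν < 0) :
    ∃ ε : ℝ, 0 < ε ∧ ∀ x ∈ K, ∀ ν ∈ Λ, qf x ν ≤ -ε := by
  obtain ⟨⟨x₀, ν₀⟩, hmem, hmax⟩ := (hKc.prod hΛc).exists_isMaxOn (hKne.prod hΛne)
    qf_continuous.continuousOn
  refine ⟨-(qf x₀ ν₀), by simpa using hneg _ hmem.1 _ hmem.2, fun x hx ν hν => ?_⟩
  have := hmax (show (x, ν) ∈ K ×ˢ Λ from ⟨hx, hν⟩)
  simpa using this

lemma bound_compact {K : Set (Fin 4 → ℝ)} (hKc : IsCompact K) :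
    ∃ M : ℝ, 0 < M ∧ ∀ x ∈ K, ∀ i, |x i| ≤ M := by
  obtain ⟨R, hR⟩ := hKc.isBounded.exists_norm_le
  refine ⟨max R 1, lt_of_lt_of_le one_pos (le_max_right R 1), fun x hx i => ?_⟩
  have h1 := norm_le_pi_norm x i
  rw [Real.norm_eq_abs] at h1
  exact h1.trans ((hR x hx).trans (le_max_left R 1))

end Aux

section Circle

variable {F : ℂ → ℂ} {Λ : Set (Fin 4 → ℝ)}

lemma unit_sq {a : ℂ} (h : ‖a‖ = 1) : a.re ^ 2 + a.im ^ 2 = 1 := by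
  have := Complex.sq_norm a
  rw [h] at this
  simpa [Complex.normSq_apply, sq] using this.symm

lemma qf_toR4 (x : Fin 4 → ℝ) (wz : ℂ × ℂ) :
    qf x (toR4 wz) = -(x 0 * wz.1.re) - x 1 * wz.1.im + x 2 * wz.2.re + x 3 * wz.2.im := rfl

lemma qf_toR4_toR4 (w z w' z' : ℂ) :
    qf (toR4 (w, z)) (toR4 (w', z')) =
      -(w.re * w'.re) - w.im * w'.im + z.re * z'.re + z.im * z'.im := rfl

lemma lam_pair (hF1 : ∀ z : ℂ, ‖z‖ = 1 → ‖F z‖ = 1)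
    (hFd : ∀ z z' : ℂ, ‖z‖ = 1 → ‖z'‖ = 1 → z ≠ z' →
      ‖F z - F z'‖ < ‖z - z'‖)
    (hΛ : Λ = {x | ∃ z : ℂ, ‖z‖ = 1 ∧ x = toR4 (F z, z)}) :
    ∀ ν₁ ∈ Λ, ∀ ν₂ ∈ Λ, qf ν₁ ν₂ ≤ 0 := by
  rintro ν₁ hν₁ ν₂ hν₂
  rw [hΛ] at hν₁ hν₂
  obtain ⟨z, hz, rfl⟩ := hν₁
  obtain ⟨z', hz', rfl⟩ := hν₂
  rw [qf_toR4_toR4]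
  have nFz := unit_sq (hF1 z hz)
  have nFz' := unit_sq (hF1 z' hz')
  have nz := unit_sq hz
  have nz' := unit_sq hz'
  rcases eq_or_ne z z' with rfl | hne
  · nlinarith [nFz, nz]
  · have hlt := hFd z z' hz hz' hne
    have hsq : ‖F z - F z'‖ ^ 2 < ‖z - z'‖ ^ 2 := by
      have h0 := norm_nonneg (F z - F z')
      nlinarith
    rw [Complex.sq_norm, Complex.sq_norm] at hsq
    simp only [Complex.normSq_apply, Complex.sub_re, Complex.sub_im] at hsq
    nlinarith [nFz, nFz', nz, nz', hsq]

lemma toR4_continuous : Continuous toR4 := by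
  unfold toR4
  apply continuous_pi
  intro i
  fin_cases i <;> simp <;> fun_prop

lemma lam_compact (hFd : ∀ z z' : ℂ, ‖z‖ = 1 → ‖z'‖ = 1 → z ≠ z' →
      ‖F z - F z'‖ < ‖z - z'‖)
    (hΛ : Λ = {x | ∃ z : ℂ, ‖z‖ = 1 ∧ x = toR4 (F z, z)}) :
    IsCompact Λ := by
  have hsph : {z : ℂ | ‖z‖ = 1} = Metric.sphere (0 : ℂ) 1 := by
    ext z; simp [Complex.norm_def, Complex.dist_eq]
  have hcs : IsCompact {z : ℂ | ‖z‖ = 1} := by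
    rw [hsph]; exact isCompact_sphere 0 1
  have hFcont : ContinuousOn F {z : ℂ | ‖z‖ = 1} := by
    apply LipschitzOnWith.continuousOn (K := 1)
    rw [lipschitzOnWith_iff_dist_le_mul]
    intro z hz z' hz'
    rcases eq_or_ne z z' with rfl | hne
    · simp
    · rw [Complex.dist_eq, Complex.dist_eq]
      have := hFd z z' hz hz' hne
      simpa using this.le
  have : Λ = (fun z => toR4 (F z, z)) '' {z : ℂ | ‖z‖ = 1} := by
    rw [hΛ]; ext x
    simp [Set.mem_image, eq_comm]
  rw [this]
  exact hcs.image_of_continuousOn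
    (toR4_continuous.comp_continuousOn (hFcont.prodMk (continuousOn_id)))

set_option maxHeartbeats 1600000 in
lemma qf_toR4' (x : Fin 4 → ℝ) (a b : ℂ) :
    qf x (toR4 (a, b)) = -(x 0 * a.re) - x 1 * a.im + x 2 * b.re + x 3 * b.im := rfl

set_option maxHeartbeats 1600000 in
lemma invis_bound (hF1 : ∀ z : ℂ, ‖z‖ = 1 → ‖F z‖ = 1)
    (hΛ : Λ = {x | ∃ z : ℂ, ‖z‖ = 1 ∧ x = toR4 (F z, z)})
    {w y : Fin 4 → ℝ} {ε M c' : ℝ} (hε : 0 < ε) (hM : 0 < M) (hc' : 0 ≤ c')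
    (hw : qf w w = -1) (hwΛ : ∀ ν ∈ Λ, qf w ν ≤ 0)
    (hyΛ : ∀ ν ∈ Λ, qf y ν ≤ -ε) (hyM : ∀ i, |y i| ≤ M)
    (hq : -c' ≤ qf w y) : ‖w‖ ≤ (2 * M + c') / ε + 1 := by
  have hρ0 : 0 ≤ Real.sqrt (w 2 ^ 2 + w 3 ^ 2) := Real.sqrt_nonneg _
  set ρ : ℝ := Real.sqrt (w 2 ^ 2 + w 3 ^ 2) with hρdef
  have hρsq : ρ ^ 2 = w 2 ^ 2 + w 3 ^ 2 := by rw [hρdef]; exact Real.sq_sqrt (by positivity)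
  clear_value ρ
  clear hρdef
  have hw' : w 0 ^ 2 + w 1 ^ 2 = ρ ^ 2 + 1 := by
    unfold qf at hw; nlinarith [hw, hρsq]
  have hkey : ε * ρ ≤ 2 * M + c' := by
    rcases eq_or_lt_of_le hρ0 with h0 | hρpos
    · rw [← h0, mul_zero]; positivity
    · have hρne : ρ ≠ 0 := ne_of_gt hρpos
      obtain ⟨z, hzdef⟩ : ∃ z : ℂ, z = ⟨w 2 / ρ, w 3 / ρ⟩ := ⟨_, rfl⟩
      have hzre : z.re = w 2 / ρ := by subst hzdef; rfl
      have hzim : z.im = w 3 / ρ := by subst hzdef; rfl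
      have hz : ‖z‖ = 1 := by
        rw [hzdef, Complex.norm_def, Complex.normSq_mk]
        have h : w 2 / ρ * (w 2 / ρ) + w 3 / ρ * (w 3 / ρ) = 1 := by
          field_simp
          nlinarith [hρsq]
        rw [h, Real.sqrt_one]
      have hν : toR4 (F z, z) ∈ Λ := by rw [hΛ]; exact ⟨z, hz, rfl⟩
      obtain ⟨f0, f1, hre, him⟩ : ∃ a b : ℝ, (F z).re = a ∧ (F z).im = b := ⟨_, _, rfl, rfl⟩
      have hf : f0 ^ 2 + f1 ^ 2 = 1 := by
        have := unit_sq (hF1 z hz)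
        rwa [hre, him] at this
      have h1 : qf w (toR4 (F z, z)) ≤ 0 := hwΛ _ hν
      have h2 : qf y (toR4 (F z, z)) ≤ -ε := hyΛ _ hν
      rw [qf_toR4', hre, him, hzre, hzim] at h1 h2
      have h1' : ρ ≤ w 0 * f0 + w 1 * f1 := by
        have hdiv2 : w 2 * (w 2 / ρ) + w 3 * (w 3 / ρ) = ρ := by
          field_simp
          nlinarith [hρsq]
        nlinarith [h1, hdiv2]
      have h2' : y 2 * w 2 + y 3 * w 3 ≤ ρ * (y 0 * f0 + y 1 * f1) - ε * ρ := by
        have hm2 := mul_le_mul_of_nonneg_left h2 hρ0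
        have e1 : ρ * (y 2 * (w 2 / ρ)) = y 2 * w 2 := by field_simp
        have e2 : ρ * (y 3 * (w 3 / ρ)) = y 3 * w 3 := by field_simp
        nlinarith [hm2, e1, e2]
      have hAB : (w 0 - ρ * f0) ^ 2 + (w 1 - ρ * f1) ^ 2 ≤ 1 := by
        have hh := mul_le_mul_of_nonneg_left h1' hρ0
        nlinarith [hw', hf, hh]
      have hA1 : -1 ≤ w 0 - ρ * f0 ∧ w 0 - ρ * f0 ≤ 1 := by
        constructor <;> nlinarith [hAB, sq_nonneg (w 1 - ρ * f1)]
      have hB1 : -1 ≤ w 1 - ρ * f1 ∧ w 1 - ρ * f1 ≤ 1 := by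
        constructor <;> nlinarith [hAB, sq_nonneg (w 0 - ρ * f0)]
      have hy0 := abs_le.mp (hyM 0)
      have hy1 := abs_le.mp (hyM 1)
      have hmul0 : -M ≤ y 0 * (w 0 - ρ * f0) := neg_le_mul_of_bounds hy0.1 hy0.2 hA1.1 hA1.2
      have hmul1 : -M ≤ y 1 * (w 1 - ρ * f1) := neg_le_mul_of_bounds hy1.1 hy1.2 hB1.1 hB1.2
      have hqwy : qf w y = -(w 0 * y 0) - w 1 * y 1 + w 2 * y 2 + w 3 * y 3 := rfl
      nlinarith [hq, hqwy, h2', hmul0, hmul1]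
  have hρle : ρ ≤ (2 * M + c') / ε := by
    rw [le_div_iff₀ hε]; nlinarith [hkey]
  have hRnn : (0 : ℝ) ≤ (2 * M + c') / ε := by positivity
  have habs0 : |w 0| ≤ ρ + 1 := by
    rw [abs_le]; constructor <;> nlinarith [hw', sq_nonneg (w 1), hρ0]
  have habs1 : |w 1| ≤ ρ + 1 := by
    rw [abs_le]; constructor <;> nlinarith [hw', sq_nonneg (w 0), hρ0]
  have habs2 : |w 2| ≤ ρ + 1 := by
    rw [abs_le]; constructor <;> nlinarith [hρsq, sq_nonneg (w 3), hρ0]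
  have habs3 : |w 3| ≤ ρ + 1 := by
    rw [abs_le]; constructor <;> nlinarith [hρsq, sq_nonneg (w 2), hρ0]
  rw [pi_norm_le_iff_of_nonneg (by linarith)]
  intro i
  fin_cases i <;> rw [Real.norm_eq_abs] <;>
    [exact habs0.trans (by linarith); exact habs1.trans (by linarith);
     exact habs2.trans (by linarith); exact habs3.trans (by linarith)]


end Circle

set_option maxHeartbeats 1600000 in
/-- For a quasi-Fuchsian group `Γ`, `c > 0` and compact subsets `K₁, K₂` of the invisible
domain, the set of `γ ∈ Γ` with `q(γ·x, y) ≥ -c` for some `x ∈ K₁`, `y ∈ K₂` is finite. -/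
theorem stmt4 (Γ : Subgroup GL4) (Λ : Set (Fin 4 → ℝ))
    (hΓ : IsQuasiFuchsian Γ Λ) (c : ℝ) (hc : 0 < c)
    (K₁ K₂ : Set (Fin 4 → ℝ)) (hK₁ : K₁ ⊆ invisible Λ) (hK₂ : K₂ ⊆ invisible Λ)
    (hK₁c : IsCompact K₁) (hK₂c : IsCompact K₂) :
    {γ : GL4 | γ ∈ Γ ∧ ∃ x ∈ K₁, ∃ y ∈ K₂, -c ≤ qf (γ x) y}.Finite := by
  classical
  obtain ⟨⟨F, hF1, hFd, hΛeq⟩, hQ, hcone, hfree, hpd, hcc⟩ := hΓ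
  rcases K₁.eq_empty_or_nonempty with rfl | hK₁ne
  · apply Set.Finite.subset Set.finite_empty
    rintro γ ⟨-, x, hx, -⟩
    exact absurd hx (Set.notMem_empty x)
  rcases K₂.eq_empty_or_nonempty with rfl | hK₂ne
  · apply Set.Finite.subset Set.finite_empty
    rintro γ ⟨-, x, hx, y, hy, -⟩
    exact absurd hy (Set.notMem_empty y)
  have hpair := lam_pair hF1 hFd hΛeq
  have hΛc : IsCompact Λ := lam_compact hFd hΛeq
  have hΛne : Λ.Nonempty := ⟨toR4 (F 1, 1), by rw [hΛeq]; exact ⟨1, by simp, rfl⟩⟩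
  obtain ⟨ε₁, hε₁, hsep₁⟩ := sep_compact hK₁c hK₁ne hΛc hΛne (fun x hx ν hν => (hK₁ hx).2 ν hν)
  obtain ⟨ε₂, hε₂, hsep₂⟩ := sep_compact hK₂c hK₂ne hΛc hΛne (fun y hy ν hν => (hK₂ hy).2 ν hν)
  obtain ⟨M₁, hM₁, hM₁b⟩ := bound_compact hK₁c
  obtain ⟨M₂, hM₂, hM₂b⟩ := bound_compact hK₂c
  -- cone and invariance helpers
  have hconeMem : ∀ γ ∈ Γ, ∀ ν ∈ Λ, ∃ lam : ℝ, 0 < lam ∧ ∃ ν' ∈ Λ, γ ν = lam • ν' := by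
    intro γ hγ ν hν
    have h1 : γ ν ∈ qcone Λ := by
      rw [← hcone γ hγ]
      exact Set.mem_image_of_mem _ ⟨1, one_pos, ν, hν, (one_smul ℝ ν).symm⟩
    simpa [qcone] using h1
  have hH1 : ∀ γ ∈ Γ, ∀ u : Fin 4 → ℝ, (∀ ν ∈ Λ, qf u ν ≤ 0) → ∀ ν ∈ Λ, qf (γ u) ν ≤ 0 := by
    intro γ hγ u hu ν hν
    obtain ⟨lam, hlam, ν', hν', heq⟩ := hconeMem γ⁻¹ (inv_mem hγ) ν hν
    have h2 : qf (γ u) ν = qf u ((γ⁻¹ : GL4) ν) := by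
      conv_lhs => rw [show ν = γ ((γ⁻¹ : GL4) ν) from (γ.apply_symm_apply ν).symm]
      exact hQ γ hγ u _
    rw [h2, heq, qf_smul_right]
    have := mul_le_mul_of_nonneg_left (hu ν' hν') hlam.le
    simpa using this
  -- the base point p
  set νa := toR4 (F 1, 1) with hνadef
  set νb := toR4 (F (-1), -1) with hνbdef
  have hνa : νa ∈ Λ := by rw [hΛeq]; exact ⟨1, by simp, hνadef⟩
  have hνb : νb ∈ Λ := by rw [hΛeq]; exact ⟨-1, by simp, hνbdef⟩
  have na := unit_sq (hF1 1 (by simp))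
  have nb := unit_sq (hF1 (-1) (by simp))
  have hab : qf νa νb < 0 := by
    have hd := hFd 1 (-1) (by simp) (by simp) (by norm_num)
    have h2 : ‖(1 : ℂ) - (-1)‖ = 2 := by norm_num
    rw [h2] at hd
    have h0 := norm_nonneg (F 1 - F (-1))
    have hsq := Complex.sq_norm (F 1 - F (-1))
    have hlt : Complex.normSq (F 1 - F (-1)) < 4 := by nlinarith only [hd, h0, hsq]
    rw [Complex.normSq_apply, Complex.sub_re, Complex.sub_im] at hlt
    have he : qf νa νb = -((F 1).re * (F (-1)).re) - (F 1).im * (F (-1)).im - 1 := by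
      rw [hνadef, hνbdef, qf_toR4_toR4]
      simp [Complex.one_re, Complex.one_im, Complex.neg_re, Complex.neg_im]
      ring
    rw [he]
    nlinarith only [na, nb, hlt]
  have hqaa : qf νa νa = 0 := by
    rw [hνadef, qf_toR4_toR4]
    simp [Complex.one_re, Complex.one_im]
    nlinarith only [na]
  have hqbb : qf νb νb = 0 := by
    rw [hνbdef, qf_toR4_toR4]
    simp [Complex.neg_re, Complex.neg_im, Complex.one_re, Complex.one_im]
    nlinarith only [nb]
  set m := (1/2 : ℝ) • νa + (1/2 : ℝ) • νb with hmdef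
  have hm : m ∈ convexHull ℝ Λ :=
    (convex_convexHull ℝ Λ) (subset_convexHull ℝ Λ hνa) (subset_convexHull ℝ Λ hνb)
      (by norm_num) (by norm_num) (by norm_num)
  have hqm : qf m m = qf νa νb / 2 := by
    rw [hmdef]
    simp only [qf_add_left, qf_add_right, qf_smul_left, qf_smul_right, hqaa, hqbb]
    rw [qf_comm νb νa]; ring
  have hqmneg : qf m m < 0 := by rw [hqm]; linarith only [hab]
  have hmΛ : ∀ ν ∈ Λ, qf m ν ≤ 0 := by
    intro ν hν
    rw [hmdef, qf_add_left, qf_smul_left, qf_smul_left]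
    linarith only [hpair νa hνa ν hν, hpair νb hνb ν hν]
  have hsqm : 0 < Real.sqrt (-(qf m m)) := Real.sqrt_pos.mpr (by linarith only [hqmneg])
  set t := (Real.sqrt (-(qf m m)))⁻¹ with htdef
  have ht : 0 < t := inv_pos.mpr hsqm
  set p := t • m with hpdef
  have hp : p ∈ convexCore Λ := ⟨m, hm, hqmneg, by rw [hpdef, htdef]⟩
  have hsq2 : Real.sqrt (-(qf m m)) ^ 2 = -(qf m m) := Real.sq_sqrt (by linarith only [hqmneg])
  have hqp : qf p p = -1 := by
    rw [hpdef, qf_smul_left, qf_smul_right, htdef]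
    have h5 : (Real.sqrt (-(qf m m)))⁻¹ * ((Real.sqrt (-(qf m m)))⁻¹ * qf m m)
        = qf m m / (Real.sqrt (-(qf m m)) ^ 2) := by
      rw [pow_two, div_eq_inv_mul, mul_inv]; ring
    rw [h5, hsq2, div_neg, div_self (ne_of_lt hqmneg)]
  have hpΛ : ∀ ν ∈ Λ, qf p ν ≤ 0 := by
    intro ν hν
    rw [hpdef, qf_smul_left]
    have := mul_le_mul_of_nonneg_left (hmΛ ν hν) ht.le
    simpa using this
  -- constants
  set B₁ := (2 * M₁ + c) / ε₁ + 1 with hB₁def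
  have hB₁pos : 0 < B₁ := by
    rw [hB₁def]
    have h1 : 0 < (2 * M₁ + c) / ε₁ := div_pos (by linarith only [hM₁, hc]) hε₁
    linarith only [h1]
  set c₂ := 4 * ‖p‖ * B₁ + 1 with hc₂def
  have hc₂pos : 0 < c₂ := by
    rw [hc₂def]
    have h1 : 0 ≤ 4 * ‖p‖ * B₁ :=
      mul_nonneg (mul_nonneg (by norm_num) (norm_nonneg p)) hB₁pos.le
    linarith only [h1]
  set B₂ := (2 * M₂ + c₂) / ε₂ + 1 with hB₂def
  have hB₂pos : 0 < B₂ := by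
    rw [hB₂def]
    have h1 : 0 < (2 * M₂ + c₂) / ε₂ := div_pos (by linarith only [hM₂, hc₂pos]) hε₂
    linarith only [h1]
  obtain ⟨y₀, hy₀⟩ := hK₂ne
  set d := ε₂ / (4 * M₂) with hddef
  have hdpos : 0 < d := by
    rw [hddef]
    exact div_pos hε₂ (by linarith only [hM₂])
  set δ := (d / B₂) ^ 2 with hδdef
  have hδpos : 0 < δ := by rw [hδdef]; exact pow_pos (div_pos hdpos hB₂pos) 2
  -- the hull is far from 0
  have hullLB : ∀ x ∈ convexHull ℝ Λ, qf x y₀ ≤ -ε₂ := by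
    intro x hx
    have hconv : Convex ℝ {x : Fin 4 → ℝ | qf x y₀ ≤ -ε₂} := by
      intro u hu v hv a b ha hb habsum
      simp only [Set.mem_setOf_eq] at hu hv ⊢
      rw [qf_add_left, qf_smul_left, qf_smul_left]
      have h1 := mul_le_mul_of_nonneg_left hu ha
      have h2 := mul_le_mul_of_nonneg_left hv hb
      have h3 : a * (-ε₂) + b * (-ε₂) = -ε₂ := by rw [← add_mul, habsum]; ring
      linarith only [h1, h2, h3]
    exact convexHull_min (fun ν hν => by
      simp only [Set.mem_setOf_eq]
      rw [qf_comm]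
      exact hsep₂ y₀ hy₀ ν hν) hconv hx
  have hullNorm : ∀ x ∈ convexHull ℝ Λ, d ≤ ‖x‖ := by
    intro x hx
    have h1 := hullLB x hx
    have h2 := abs_qf_le x y₀
    have h3 : ‖y₀‖ ≤ M₂ := by
      rw [pi_norm_le_iff_of_nonneg hM₂.le]
      intro i; rw [Real.norm_eq_abs]; exact hM₂b y₀ hy₀ i
    have h4 : ε₂ ≤ 4 * ‖x‖ * M₂ := by
      have h5 : ε₂ ≤ |qf x y₀| := by
        have h6 := neg_abs_le (qf x y₀); linarith only [h6, h1]
      have h7 : 0 ≤ 4 * ‖x‖ := by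
        have := norm_nonneg x; linarith only [this]
      have h8 := mul_le_mul_of_nonneg_left h3 h7
      linarith only [h5, h2, h8]
    rw [hddef, div_le_iff₀ (by linarith only [hM₂] : (0:ℝ) < 4 * M₂)]
    linarith only [h4]
  -- the compact piece L of the convex core
  set K' := convexHull ℝ Λ ∩ {x : Fin 4 → ℝ | qf x x ≤ -δ} with hK'def
  have hK'c : IsCompact K' :=
    (isCompact_hull hΛc).inter_right (isClosed_le qf_self_continuous continuous_const)
  set f := fun x : Fin 4 → ℝ => (Real.sqrt (-(qf x x)))⁻¹ • x with hfdef
  have hfc : ContinuousOn f K' := by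
    apply ContinuousOn.smul (f := fun x : Fin 4 → ℝ => (Real.sqrt (-(qf x x)))⁻¹) (g := fun x => x)
    · apply ContinuousOn.inv₀
      · exact (Real.continuous_sqrt.comp (continuous_neg.comp qf_self_continuous)).continuousOn
      · intro x hx
        have hxx : 0 < -(qf x x) := by
          have := hx.2
          simp only [Set.mem_setOf_eq] at this
          linarith
        exact ne_of_gt (Real.sqrt_pos.mpr hxx)
    · exact continuousOn_id
  set L := f '' K' with hLdef
  have hLc : IsCompact L := hK'c.image_of_continuousOn hfc
  have hLsub : L ⊆ convexCore Λ := by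
    rintro _ ⟨x, ⟨hx1, hx2⟩, rfl⟩
    simp only [Set.mem_setOf_eq] at hx2
    exact ⟨x, hx1, by linarith, rfl⟩
  -- conclude via proper discontinuity
  apply Set.Finite.subset (hpd {p} L (Set.singleton_subset_iff.mpr hp) hLsub isCompact_singleton hLc)
  rintro γ ⟨hγ, x, hx, y, hy, hqxy⟩
  have hinv := inv_mem hγ
  -- the pulled-back point w₁ = γ⁻¹ y is bounded
  set w₁ := (γ⁻¹ : GL4) y with hw₁def
  have hyy := hK₂ hy
  have hw₁q : qf w₁ w₁ = -1 := by rw [hw₁def, hQ γ⁻¹ hinv]; exact hyy.1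
  have hw₁Λ : ∀ ν ∈ Λ, qf w₁ ν ≤ 0 := hH1 γ⁻¹ hinv y (fun ν hν => (hyy.2 ν hν).le)
  have hyeq : γ w₁ = y := γ.apply_symm_apply y
  have hq₁ : -c ≤ qf w₁ x :=
    calc -c ≤ qf (γ x) y := hqxy
      _ = qf x w₁ := by conv_lhs => rw [← hyeq]; rw [hQ γ hγ x w₁]
      _ = qf w₁ x := qf_comm x w₁
  have hw₁B : ‖w₁‖ ≤ B₁ := by
    rw [hB₁def]
    exact invis_bound hF1 hΛeq hε₁ hM₁ hc.le hw₁q hw₁Λ (hsep₁ x hx) (hM₁b x hx) hq₁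
  -- γ p is bounded
  have hγpq : qf (γ p) (γ p) = -1 := by rw [hQ γ hγ]; exact hqp
  have hγpΛ : ∀ ν ∈ Λ, qf (γ p) ν ≤ 0 := hH1 γ hγ p hpΛ
  have hγpy : -c₂ ≤ qf (γ p) y := by
    have h1 : qf (γ p) y = qf p w₁ := by conv_lhs => rw [← hyeq]; rw [hQ γ hγ p w₁]
    have h2 := abs_qf_le p w₁
    have h3 : 4 * ‖p‖ * ‖w₁‖ ≤ 4 * ‖p‖ * B₁ := by
      have h7 : 0 ≤ 4 * ‖p‖ := by have := norm_nonneg p; linarith only [this]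
      exact mul_le_mul_of_nonneg_left hw₁B h7
    have h4 := neg_abs_le (qf p w₁)
    rw [h1, hc₂def]
    linarith only [h2, h3, h4]
  have hγpB : ‖γ p‖ ≤ B₂ := by
    rw [hB₂def]
    exact invis_bound hF1 hΛeq hε₂ hM₂ hc₂pos.le hγpq hγpΛ (hsep₂ y hy) (hM₂b y hy) hγpy
  -- γ p lies in the convex core, with controlled witness
  obtain ⟨l₁, hl₁, ν₁, hν₁, he₁⟩ := hconeMem γ hγ νa hνa
  obtain ⟨l₂, hl₂, ν₂, hν₂, he₂⟩ := hconeMem γ hγ νb hνb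
  set s := (l₁ + l₂) / 2 with hsdef
  have hs : 0 < s := by
    rw [hsdef]
    exact div_pos (by linarith only [hl₁, hl₂]) (by norm_num)
  have hs0 : s ≠ 0 := ne_of_gt hs
  set m' := (l₁ / (2 * s)) • ν₁ + (l₂ / (2 * s)) • ν₂ with hm'def
  have hm' : m' ∈ convexHull ℝ Λ := by
    have hsum : l₁ / (2 * s) + l₂ / (2 * s) = 1 := by
      rw [← add_div, hsdef]
      field_simp
    exact (convex_convexHull ℝ Λ) (subset_convexHull ℝ Λ hν₁) (subset_convexHull ℝ Λ hν₂)
      (div_pos hl₁ (by linarith only [hs])).le (div_pos hl₂ (by linarith only [hs])).le hsum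
  have hγm : γ m = s • m' := by
    rw [hmdef, map_add, map_smul, map_smul, he₁, he₂, hm'def]
    match_scalars <;> field_simp <;> ring
  have hqmm' : qf m m = s ^ 2 * qf m' m' := by
    have h1 : qf (γ m) (γ m) = qf m m := hQ γ hγ m m
    rw [hγm, qf_smul_left, qf_smul_right] at h1
    rw [← h1]; ring
  have hq'neg : qf m' m' < 0 := by
    by_contra hcon
    push_neg at hcon
    have h1 : 0 ≤ s ^ 2 * qf m' m' := mul_nonneg (by positivity) hcon
    linarith only [hqmneg, hqmm', h1]
  have hsq' : 0 < Real.sqrt (-(qf m' m')) := Real.sqrt_pos.mpr (by linarith only [hq'neg])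
  have hγp_eq : γ p = (Real.sqrt (-(qf m' m')))⁻¹ • m' := by
    rw [hpdef, map_smul, hγm, smul_smul, htdef]
    congr 1
    have hqq : -(qf m m) = (-(qf m' m')) * s ^ 2 := by rw [hqmm']; ring
    rw [hqq, Real.sqrt_mul (by linarith only [hq'neg] : (0:ℝ) ≤ -(qf m' m')), Real.sqrt_sq hs.le,
      mul_inv, inv_mul_cancel_right₀ hs0]
  -- m' is in the compact K'
  have hm'K' : m' ∈ K' := by
    refine ⟨hm', ?_⟩
    simp only [Set.mem_setOf_eq]
    have hd' := hullNorm m' hm'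
    have hnorm : ‖γ p‖ = (Real.sqrt (-(qf m' m')))⁻¹ * ‖m'‖ := by
      rw [hγp_eq, norm_smul, Real.norm_eq_abs, abs_of_pos (inv_pos.mpr hsq')]
    have h5 : ‖m'‖ = ‖γ p‖ * Real.sqrt (-(qf m' m')) := by
      rw [hnorm]; field_simp
    have h6 : d ≤ B₂ * Real.sqrt (-(qf m' m')) := by
      calc d ≤ ‖m'‖ := hd'
        _ = ‖γ p‖ * Real.sqrt (-(qf m' m')) := h5
        _ ≤ B₂ * Real.sqrt (-(qf m' m')) := mul_le_mul_of_nonneg_right hγpB hsq'.le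
    have h7 : d / B₂ ≤ Real.sqrt (-(qf m' m')) := by
      rw [div_le_iff₀ hB₂pos]
      linarith only [h6]
    have h8 : (d / B₂) ^ 2 ≤ -(qf m' m') := by
      have h9 := pow_le_pow_left₀ (div_pos hdpos hB₂pos).le h7 2
      rwa [Real.sq_sqrt (by linarith only [hq'neg] : (0:ℝ) ≤ -(qf m' m'))] at h9
    rw [hδdef]
    linarith only [h8]
  exact ⟨hγ, γ p, ⟨p, rfl, rfl⟩, ⟨m', hm'K', hγp_eq.symm⟩⟩

end
end

section
/- Let Γ be a quasi-Fuchsian group with limit circle Λ, and define the lifted trapped set K̃ := {(x,v) ∈ T¹AdS₃ : there exist ν, ν' ∈ Λ and λ, λ' > 0 with x + v = λ·ν and x − v = λ'·ν'}. Then the diagonal action of Γ on K̃ is cocompact: there exists a compact subset L ⊆ K̃ with Γ·L = K̃. -/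
noncomputable section

/-- The lifted trapped set `K̃ ⊆ T¹AdS₃`: space-like unit tangent vectors whose geodesic has
both endpoints (the rays through `x + v` and `x - v`) in the limit circle `Λ`. -/
def Ktilde (Λ : Set (Fin 4 → ℝ)) : Set ((Fin 4 → ℝ) × (Fin 4 → ℝ)) :=
  {p | qf p.1 p.1 = -1 ∧ qf p.1 p.2 = 0 ∧ qf p.2 p.2 = 1 ∧
    (∃ ν ∈ Λ, ∃ lam : ℝ, 0 < lam ∧ p.1 + p.2 = lam • ν) ∧
    (∃ ν' ∈ Λ, ∃ lam' : ℝ, 0 < lam' ∧ p.1 - p.2 = lam' • ν')}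

section AuxLemmas

variable {Λ : Set (Fin 4 → ℝ)}

lemma qf_symm (u w : Fin 4 → ℝ) : qf u w = qf w u := by unfold qf; ring

lemma qf_add_left_s15 (u v w : Fin 4 → ℝ) : qf (u + v) w = qf u w + qf v w := by
  simp only [qf, Pi.add_apply]; ring

lemma qf_sub_left (u v w : Fin 4 → ℝ) : qf (u - v) w = qf u w - qf v w := by
  simp only [qf, Pi.sub_apply]; ring

lemma qf_smul_left_s15 (c : ℝ) (u w : Fin 4 → ℝ) : qf (c • u) w = c * qf u w := by
  simp only [qf, Pi.smul_apply, smul_eq_mul]; ring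

lemma qf_smul_right_s15 (c : ℝ) (u w : Fin 4 → ℝ) : qf u (c • w) = c * qf u w := by
  simp only [qf, Pi.smul_apply, smul_eq_mul]; ring

lemma qf_cont : Continuous fun p : (Fin 4 → ℝ) × (Fin 4 → ℝ) => qf p.1 p.2 := by
  unfold qf
  fun_prop

lemma qf_toR4_s15 (w z w' z' : ℂ) :
    qf (toR4 (w, z)) (toR4 (w', z')) =
      -(w.re * w'.re + w.im * w'.im) + (z.re * z'.re + z.im * z'.im) := by
  simp [qf, toR4]; ring

lemma re_mul_abs (w w' : ℂ) (hw : ‖w‖ = 1) (hw' : ‖w'‖ = 1) :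
    w.re * w'.re + w.im * w'.im = (2 - ‖w - w'‖ ^ 2) / 2 := by
  have h1 : ‖w‖ ^ 2 = w.re ^ 2 + w.im ^ 2 := by
    rw [Complex.sq_norm, Complex.normSq_apply]; ring
  have h2 : ‖w'‖ ^ 2 = w'.re ^ 2 + w'.im ^ 2 := by
    rw [Complex.sq_norm, Complex.normSq_apply]; ring
  have h3 : ‖w - w'‖ ^ 2 = (w.re - w'.re) ^ 2 + (w.im - w'.im) ^ 2 := by
    rw [Complex.sq_norm, Complex.normSq_apply]; simp [Complex.sub_re, Complex.sub_im]; ring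
  rw [hw] at h1; rw [hw'] at h2
  nlinarith [h1, h2, h3]

lemma qf_pair_eq {F : ℂ → ℂ} (hF1 : ∀ z : ℂ, ‖z‖ = 1 → ‖F z‖ = 1)
    {z z' : ℂ} (hz : ‖z‖ = 1) (hz' : ‖z'‖ = 1) :
    qf (toR4 (F z, z)) (toR4 (F z', z')) =
      (‖F z - F z'‖ ^ 2 - ‖z - z'‖ ^ 2) / 2 := by
  rw [qf_toR4_s15, re_mul_abs _ _ (hF1 z hz) (hF1 z' hz'), re_mul_abs _ _ hz hz']
  ring

lemma qf_self_zero (hAC : IsAcausalCircle Λ) {ν : Fin 4 → ℝ} (hν : ν ∈ Λ) : qf ν ν = 0 := by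
  obtain ⟨F, hF1, hF2, hΛ⟩ := hAC
  rw [hΛ] at hν; obtain ⟨z, hz, rfl⟩ := hν
  rw [qf_pair_eq hF1 hz hz]; simp

lemma qf_pair_nonpos (hAC : IsAcausalCircle Λ) {ν ν' : Fin 4 → ℝ} (hν : ν ∈ Λ) (hν' : ν' ∈ Λ) :
    qf ν ν' ≤ 0 ∧ (qf ν ν' = 0 → ν = ν') := by
  obtain ⟨F, hF1, hF2, hΛ⟩ := hAC
  rw [hΛ] at hν hν'; obtain ⟨z, hz, rfl⟩ := hν; obtain ⟨z', hz', rfl⟩ := hν'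
  rw [qf_pair_eq hF1 hz hz']
  rcases eq_or_ne z z' with rfl | hne
  · simp
  · have h := hF2 z z' hz hz' hne
    have h0 : (0:ℝ) ≤ ‖F z - F z'‖ := norm_nonneg _
    have : ‖F z - F z'‖ ^ 2 < ‖z - z'‖ ^ 2 := by nlinarith
    constructor
    · linarith
    · intro hq; exfalso; nlinarith

lemma lam_compact_s15 (hAC : IsAcausalCircle Λ) : IsCompact Λ := by
  obtain ⟨F, hF1, hF2, hΛ⟩ := hAC
  have hS : IsCompact {z : ℂ | ‖z‖ = 1} := by
    have : {z : ℂ | ‖z‖ = 1} = Metric.sphere (0:ℂ) 1 := by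
      ext z; simp [Complex.dist_eq]
    rw [this]; exact isCompact_sphere 0 1
  have hΛ' : Λ = (fun z : ℂ => toR4 (F z, z)) '' {z : ℂ | ‖z‖ = 1} := by
    rw [hΛ]; ext x; simp [eq_comm, Set.mem_image]
  rw [hΛ']
  apply hS.image_of_continuousOn
  have hFcont : ContinuousOn F {z : ℂ | ‖z‖ = 1} := by
    apply LipschitzOnWith.continuousOn (K := 1)
    rw [lipschitzOnWith_iff_dist_le_mul]
    intro z hz z' hz'
    rcases eq_or_ne z z' with rfl | hne
    · simp
    · have h := (hF2 z z' hz hz' hne).le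
      simpa [Complex.dist_eq] using h
  rw [continuousOn_pi]
  intro i
  fin_cases i <;> simp only [toR4] <;> simp
  · exact Complex.continuous_re.comp_continuousOn hFcont
  · exact Complex.continuous_im.comp_continuousOn hFcont
  · exact Complex.continuous_re.continuousOn
  · exact Complex.continuous_im.continuousOn

lemma lam_coord_bound (hAC : IsAcausalCircle Λ) {ν : Fin 4 → ℝ} (hν : ν ∈ Λ) (i : Fin 4) :
    |ν i| ≤ 1 := by
  obtain ⟨F, hF1, hF2, hΛ⟩ := hAC
  rw [hΛ] at hν; obtain ⟨z, hz, rfl⟩ := hν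
  fin_cases i <;> simp only [toR4] <;> simp
  · calc |(F z).re| ≤ ‖F z‖ := Complex.abs_re_le_norm _
      _ = 1 := hF1 z hz
  · calc |(F z).im| ≤ ‖F z‖ := Complex.abs_im_le_norm _
      _ = 1 := hF1 z hz
  · calc |z.re| ≤ ‖z‖ := Complex.abs_re_le_norm _
      _ = 1 := hz
  · calc |z.im| ≤ ‖z‖ := Complex.abs_im_le_norm _
      _ = 1 := hz

lemma lam_norm_bound (hAC : IsAcausalCircle Λ) {ν : Fin 4 → ℝ} (hν : ν ∈ Λ) : ‖ν‖ ≤ 1 := by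
  rw [pi_norm_le_iff_of_nonneg zero_le_one]
  intro i
  rw [Real.norm_eq_abs]
  exact lam_coord_bound hAC hν i

lemma qf_abs_le (u w : Fin 4 → ℝ) : |qf u w| ≤ 4 * ‖u‖ * ‖w‖ := by
  have hb : ∀ (v : Fin 4 → ℝ) (i : Fin 4), |v i| ≤ ‖v‖ := by
    intro v i
    rw [← Real.norm_eq_abs]
    exact norm_le_pi_norm v i
  have hnu : 0 ≤ ‖u‖ := norm_nonneg u
  have hnw : 0 ≤ ‖w‖ := norm_nonneg w
  have habs : ∀ i : Fin 4, |u i * w i| ≤ ‖u‖ * ‖w‖ := by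
    intro i
    rw [abs_mul]
    exact mul_le_mul (hb u i) (hb w i) (abs_nonneg _) hnu
  have h0 := abs_le.1 (habs 0); have h1 := abs_le.1 (habs 1)
  have h2 := abs_le.1 (habs 2); have h3 := abs_le.1 (habs 3)
  unfold qf
  rw [abs_le]
  constructor <;> nlinarith [h0.1, h0.2, h1.1, h1.2, h2.1, h2.2, h3.1, h3.2]

lemma hull_qf_nonpos_right (hAC : IsAcausalCircle Λ) {w ν : Fin 4 → ℝ}
    (hw : w ∈ convexHull ℝ Λ) (hν : ν ∈ Λ) : qf w ν ≤ 0 := by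
  have hconv : Convex ℝ {u : Fin 4 → ℝ | qf u ν ≤ 0} := by
    intro a ha b hb s t hs ht hst
    simp only [Set.mem_setOf_eq] at *
    rw [qf_add_left_s15, qf_smul_left_s15, qf_smul_left_s15]
    nlinarith
  have := convexHull_min (fun ν' hν' => (qf_pair_nonpos hAC hν' hν).1) hconv
  exact this hw

lemma hull_qf_neg (hAC : IsAcausalCircle Λ) {w ν : Fin 4 → ℝ}
    (hw : w ∈ convexHull ℝ Λ) (hwneg : qf w w < 0) (hν : ν ∈ Λ) : qf w ν < 0 := by
  rcases lt_or_eq_of_le (hull_qf_nonpos_right hAC hw hν) with h | h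
  · exact h
  exfalso
  rw [convexHull_eq] at hw
  obtain ⟨ι, t, f, z, hf0, hf1, hzΛ, hcm⟩ := hw
  rw [Finset.centerMass_eq_of_sum_1 _ _ hf1] at hcm
  have hsum0 : ∀ s : Finset ι, qf (∑ i ∈ s, f i • z i) ν = ∑ i ∈ s, f i * qf (z i) ν := by
    classical
    intro s
    induction s using Finset.induction with
    | empty => simpa using qf_smul_left_s15 0 0 ν
    | insert _ _ hnotmem ih =>
        rw [Finset.sum_insert hnotmem, Finset.sum_insert hnotmem, qf_add_left_s15, qf_smul_left_s15, ih]
  have hsum : qf w ν = ∑ i ∈ t, f i * qf (z i) ν := by rw [← hcm, hsum0]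
  have hterm : ∀ i ∈ t, f i * qf (z i) ν ≤ 0 := fun i hi =>
    mul_nonpos_of_nonneg_of_nonpos (hf0 i hi) (qf_pair_nonpos hAC (hzΛ i hi) hν).1
  have hzero : ∀ i ∈ t, f i * qf (z i) ν = 0 := by
    intro i hi
    have := Finset.sum_eq_zero_iff_of_nonpos hterm |>.1 (by rw [← hsum, h])
    exact this i hi
  have hz_eq : ∀ i ∈ t, f i • z i = f i • ν := by
    intro i hi
    rcases eq_or_lt_of_le (hf0 i hi) with h0 | hpos
    · rw [← h0]; simp
    · have : qf (z i) ν = 0 := by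
        have := hzero i hi
        exact (mul_eq_zero.1 this).resolve_left (ne_of_gt hpos)
      rw [(qf_pair_nonpos hAC (hzΛ i hi) hν).2 this]
  have hw_eq : w = ν := by
    rw [← hcm, Finset.sum_congr rfl hz_eq, ← Finset.sum_smul, hf1, one_smul]
  rw [hw_eq, qf_self_zero hAC hν] at hwneg
  exact lt_irrefl _ hwneg

lemma core_qf_neg (hAC : IsAcausalCircle Λ) {x ν : Fin 4 → ℝ}
    (hx : x ∈ convexCore Λ) (hν : ν ∈ Λ) : qf x ν < 0 := by
  obtain ⟨w, hw, hwneg, rfl⟩ := hx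
  rw [qf_smul_left_s15]
  have hs : 0 < Real.sqrt (-(qf w w)) := Real.sqrt_pos.2 (by linarith)
  exact mul_neg_of_pos_of_neg (inv_pos.2 hs) (hull_qf_neg hAC hw hwneg hν)

lemma Ktilde_fst_mem_core {p : (Fin 4 → ℝ) × (Fin 4 → ℝ)} (hp : p ∈ Ktilde Λ) :
    p.1 ∈ convexCore Λ := by
  obtain ⟨hx, hxv, hv, ⟨ν, hν, lam, hlam, hplus⟩, ⟨ν', hν', lam', hlam', hminus⟩⟩ := hp
  set x := p.1; set v := p.2
  have hsum : (2:ℝ) • x = lam • ν + lam' • ν' := by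
    rw [← hplus, ← hminus]; module
  have hT : 0 < lam + lam' := by linarith
  set a : ℝ := lam / (lam + lam')
  set b : ℝ := lam' / (lam + lam')
  have hab : a + b = 1 := by
    show lam / (lam + lam') + lam' / (lam + lam') = 1
    field_simp
  set w : Fin 4 → ℝ := a • ν + b • ν'
  have hwhull : w ∈ convexHull ℝ Λ := by
    exact (convex_convexHull ℝ Λ) (subset_convexHull ℝ Λ hν) (subset_convexHull ℝ Λ hν')
      (by positivity) (by positivity) hab
  have hxw : x = ((lam + lam') / 2) • w := by
    have : ((lam + lam') / 2) • w = (2:ℝ)⁻¹ • ((lam + lam') • w) := by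
      rw [smul_smul]; ring_nf
    rw [this]
    have hw2 : (lam + lam') • w = lam • ν + lam' • ν' := by
      simp only [w, a, b, smul_add, smul_smul]
      rw [mul_div_cancel₀ _ (ne_of_gt hT), mul_div_cancel₀ _ (ne_of_gt hT)]
    rw [hw2, ← hsum, smul_smul]
    norm_num
  have hqw : qf w w = -(2 / (lam + lam'))^2 := by
    have : w = (2 / (lam + lam')) • x := by
      rw [hxw, smul_smul]
      rw [div_mul_div_comm]
      rw [mul_comm 2 (lam+lam'), div_self (by positivity)]
      simp
    rw [this, qf_smul_left_s15, qf_smul_right_s15, hx]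
    ring
  have hqwneg : qf w w < 0 := by
    rw [hqw]
    have : (0:ℝ) < (2 / (lam + lam'))^2 := by positivity
    linarith
  refine ⟨w, hwhull, hqwneg, ?_⟩
  have hsqrt : Real.sqrt (-(qf w w)) = 2 / (lam + lam') := by
    rw [hqw, neg_neg]
    exact Real.sqrt_sq (by positivity)
  rw [hsqrt, hxw]
  congr 1
  field_simp

lemma Ktilde_gamma_mem {Γ : Subgroup GL4} (hΓ : IsQuasiFuchsian Γ Λ)
    {γ : GL4} (hγ : γ ∈ Γ) {p : (Fin 4 → ℝ) × (Fin 4 → ℝ)} (hp : p ∈ Ktilde Λ) :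
    (γ p.1, γ p.2) ∈ Ktilde Λ := by
  obtain ⟨hAC, hPQ, hcone, -, -, -⟩ := hΓ
  obtain ⟨hx, hxv, hv, ⟨ν, hν, lam, hlam, hplus⟩, ⟨ν', hν', lam', hlam', hminus⟩⟩ := hp
  have hq := hPQ γ hγ
  refine ⟨by rw [hq _ _, hx], by rw [hq _ _, hxv], by rw [hq _ _, hv], ?_, ?_⟩
  · have h1 : γ p.1 + γ p.2 = γ (p.1 + p.2) := (map_add γ p.1 p.2).symm
    have h2 : p.1 + p.2 ∈ qcone Λ := ⟨lam, hlam, ν, hν, hplus⟩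
    have h3 : γ (p.1 + p.2) ∈ qcone Λ := by
      rw [← hcone γ hγ]; exact Set.mem_image_of_mem _ h2
    obtain ⟨mu, hmu, μ, hμ, hform⟩ := h3
    exact ⟨μ, hμ, mu, hmu, by rw [h1, hform]⟩
  · have h1 : γ p.1 - γ p.2 = γ (p.1 - p.2) := (map_sub γ p.1 p.2).symm
    have h2 : p.1 - p.2 ∈ qcone Λ := ⟨lam', hlam', ν', hν', hminus⟩
    have h3 : γ (p.1 - p.2) ∈ qcone Λ := by
      rw [← hcone γ hγ]; exact Set.mem_image_of_mem _ h2
    obtain ⟨mu, hmu, μ, hμ, hform⟩ := h3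
    exact ⟨μ, hμ, mu, hmu, by rw [h1, hform]⟩

lemma uniform_neg (hAC : IsAcausalCircle Λ) {L₀ : Set (Fin 4 → ℝ)}
    (hcpt : IsCompact L₀) (hsub : L₀ ⊆ convexCore Λ) :
    ∃ c > 0, ∀ x ∈ L₀, ∀ ν ∈ Λ, qf x ν ≤ -c := by
  rcases L₀.eq_empty_or_nonempty with rfl | hne
  · exact ⟨1, one_pos, by simp⟩
  have hΛne : Λ.Nonempty := by
    obtain ⟨F, hF1, hF2, hΛ⟩ := hAC
    exact ⟨toR4 (F 1, 1), by rw [hΛ]; exact ⟨1, by simp, rfl⟩⟩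
  obtain ⟨p₀, hp₀, hmax⟩ := (hcpt.prod (lam_compact_s15 hAC)).exists_isMaxOn
    (hne.prod hΛne) qf_cont.continuousOn
  refine ⟨-(qf p₀.1 p₀.2), by
    have : qf p₀.1 p₀.2 < 0 := core_qf_neg hAC (hsub hp₀.1) hp₀.2
    linarith, ?_⟩
  intro x hx ν hν
  have := hmax (Set.mk_mem_prod hx hν)
  simpa using this

end AuxLemmas


/-- The diagonal action of a quasi-Fuchsian group `Γ` on the lifted trapped set `K̃` is
cocompact: there is a compact `L ⊆ K̃` with `Γ·L = K̃`. -/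
theorem stmt15 (Γ : Subgroup GL4) (Λ : Set (Fin 4 → ℝ))
    (hΓ : IsQuasiFuchsian Γ Λ) :
    ∃ L : Set ((Fin 4 → ℝ) × (Fin 4 → ℝ)), L ⊆ Ktilde Λ ∧ IsCompact L ∧
      {p : (Fin 4 → ℝ) × (Fin 4 → ℝ) |
        ∃ γ ∈ Γ, ∃ p' ∈ L, p = (γ p'.1, γ p'.2)} = Ktilde Λ := by
  obtain ⟨hAC, hPQ, hcone, hfree, hpd, L₀, hL₀sub, hL₀cpt, hL₀cover⟩ :=
    id hΓ
  obtain ⟨c, hc, hbound⟩ := uniform_neg hAC hL₀cpt hL₀sub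
  obtain ⟨R₀', hR₀'⟩ := hL₀cpt.isBounded.exists_norm_le
  set R₀ : ℝ := max R₀' 1 with hR₀def
  have hR₀1 : (1:ℝ) ≤ R₀ := le_max_right _ _
  have hR₀pos : (0:ℝ) < R₀ := by linarith
  have hR₀ : ∀ x ∈ L₀, ‖x‖ ≤ R₀ := fun x hx => le_trans (hR₀' x hx) (le_max_left _ _)
  set L : Set ((Fin 4 → ℝ) × (Fin 4 → ℝ)) :=
    {p | p ∈ Ktilde Λ ∧ p.1 ∈ L₀} with hLdef
  -- key lambda bounds
  have hlam_val : ∀ p ∈ Ktilde Λ, p.1 ∈ L₀ → ∀ ν ∈ Λ, ∀ lam : ℝ, 0 < lam →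
      (p.1 + p.2 = lam • ν ∨ p.1 - p.2 = lam • ν) →
      1/(4*R₀) ≤ lam ∧ lam ≤ 1/c := by
    intro p hp hpL ν hν lam hlam hcase
    obtain ⟨hx, hxv, hv, -, -⟩ := hp
    have hqsum : lam * qf ν p.1 = -1 := by
      rcases hcase with h | h
      · have h2 := congrArg (fun u => qf u p.1) h
        simp only [qf_add_left_s15, qf_smul_left_s15] at h2
        rw [hx, qf_symm p.2 p.1, hxv] at h2
        linarith
      · have h2 := congrArg (fun u => qf u p.1) h
        simp only [qf_sub_left, qf_smul_left_s15] at h2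
        rw [hx, qf_symm p.2 p.1, hxv] at h2
        linarith
    have hν1 : ‖ν‖ ≤ 1 := lam_norm_bound hAC hν
    have habs : |qf ν p.1| ≤ 4 * R₀ := by
      calc |qf ν p.1| ≤ 4 * ‖ν‖ * ‖p.1‖ := qf_abs_le ν p.1
        _ ≤ 4 * 1 * R₀ := by
            have h1 := hR₀ p.1 hpL
            have h2 := norm_nonneg p.1
            nlinarith
        _ = 4 * R₀ := by ring
    have hneg : qf ν p.1 ≤ -c := by rw [qf_symm]; exact hbound p.1 hpL ν hν
    have habs' := abs_le.1 habs
    constructor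
    · rw [div_le_iff₀ (by positivity)]
      nlinarith [habs'.1, habs'.2]
    · rw [le_div_iff₀ hc]
      nlinarith
  have hIccpos : (0:ℝ) < 1/(4*R₀) := by positivity
  refine ⟨L, fun p hp => hp.1, ?_, ?_⟩
  · -- compactness
    apply Metric.isCompact_of_isClosed_isBounded
    · -- closed
      apply IsSeqClosed.isClosed
      intro u p hu hup
      have hufst : Filter.Tendsto (fun n => (u n).1) Filter.atTop (nhds p.1) :=
        (continuous_fst.tendsto p).comp hup
      have husnd : Filter.Tendsto (fun n => (u n).2) Filter.atTop (nhds p.2) :=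
        (continuous_snd.tendsto p).comp hup
      have hp1 : p.1 ∈ L₀ :=
        hL₀cpt.isClosed.mem_of_tendsto hufst (Filter.Eventually.of_forall fun n => (hu n).2)
      -- q conditions at the limit
      have hqlim : ∀ (f g : ((Fin 4 → ℝ) × (Fin 4 → ℝ)) → (Fin 4 → ℝ)) (a : ℝ),
          Continuous f → Continuous g → (∀ n, qf (f (u n)) (g (u n)) = a) →
          qf (f p) (g p) = a := by
        intro f g a hf hg heq
        have hcont : Continuous fun q => qf (f q) (g q) :=
          qf_cont.comp (hf.prodMk hg)
        have h1 : Filter.Tendsto (fun n => qf (f (u n)) (g (u n)))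
            Filter.atTop (nhds (qf (f p) (g p))) := (hcont.tendsto p).comp hup
        have h2 : Filter.Tendsto (fun n => qf (f (u n)) (g (u n)))
            Filter.atTop (nhds a) := by simp only [heq]; exact tendsto_const_nhds
        exact tendsto_nhds_unique h1 h2
      have hq1 : qf p.1 p.1 = -1 :=
        hqlim Prod.fst Prod.fst _ continuous_fst continuous_fst fun n => (hu n).1.1
      have hq2 : qf p.1 p.2 = 0 :=
        hqlim Prod.fst Prod.snd _ continuous_fst continuous_snd fun n => (hu n).1.2.1
      have hq3 : qf p.2 p.2 = 1 :=
        hqlim Prod.snd Prod.snd _ continuous_snd continuous_snd fun n => (hu n).1.2.2.1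
      -- endpoint data
      have hdata : ∀ n, ∃ d : (ℝ × (Fin 4 → ℝ)) × (ℝ × (Fin 4 → ℝ)),
          (d.1.1 ∈ Set.Icc (1/(4*R₀)) (1/c) ∧ d.1.2 ∈ Λ ∧
            (u n).1 + (u n).2 = d.1.1 • d.1.2) ∧
          (d.2.1 ∈ Set.Icc (1/(4*R₀)) (1/c) ∧ d.2.2 ∈ Λ ∧
            (u n).1 - (u n).2 = d.2.1 • d.2.2) := by
        intro n
        obtain ⟨hK, hL0⟩ := hu n
        obtain ⟨-, -, -, ⟨ν, hν, lam, hlam, hplus⟩, ⟨ν', hν', lam', hlam', hminus⟩⟩ := id hK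
        refine ⟨((lam, ν), (lam', ν')), ⟨?_, hν, hplus⟩, ⟨?_, hν', hminus⟩⟩
        · exact Set.mem_Icc.2 (hlam_val _ hK hL0 ν hν lam hlam (Or.inl hplus))
        · exact Set.mem_Icc.2 (hlam_val _ hK hL0 ν' hν' lam' hlam' (Or.inr hminus))
      choose d hd using hdata
      set C : Set ((ℝ × (Fin 4 → ℝ)) × (ℝ × (Fin 4 → ℝ))) :=
        (Set.Icc (1/(4*R₀)) (1/c) ×ˢ Λ) ×ˢ (Set.Icc (1/(4*R₀)) (1/c) ×ˢ Λ) with hCdef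
      have hCcpt : IsCompact C :=
        ((isCompact_Icc.prod (lam_compact_s15 hAC)).prod
          (isCompact_Icc.prod (lam_compact_s15 hAC)))
      have hdC : ∀ n, d n ∈ C := by
        intro n
        obtain ⟨⟨h1, h2, -⟩, ⟨h3, h4, -⟩⟩ := hd n
        exact ⟨⟨h1, h2⟩, ⟨h3, h4⟩⟩
      obtain ⟨a, haC, φ, hφ, hconv⟩ := hCcpt.isSeqCompact hdC
      obtain ⟨⟨ha1, ha2⟩, ⟨ha3, ha4⟩⟩ := haC
      -- componentwise limits
      have hφtop : Filter.Tendsto φ Filter.atTop Filter.atTop := hφ.tendsto_atTop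
      have hlim1 : Filter.Tendsto (fun n => (d (φ n)).1.1 • (d (φ n)).1.2)
          Filter.atTop (nhds (a.1.1 • a.1.2)) := by
        have hx : Filter.Tendsto (fun n => (d (φ n)).1.1) Filter.atTop (nhds a.1.1) :=
          ((continuous_fst.comp continuous_fst).tendsto a).comp hconv
        have hy : Filter.Tendsto (fun n => (d (φ n)).1.2) Filter.atTop (nhds a.1.2) :=
          ((continuous_snd.comp continuous_fst).tendsto a).comp hconv
        exact hx.smul hy
      have hlim2 : Filter.Tendsto (fun n => (d (φ n)).2.1 • (d (φ n)).2.2)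
          Filter.atTop (nhds (a.2.1 • a.2.2)) := by
        have hx : Filter.Tendsto (fun n => (d (φ n)).2.1) Filter.atTop (nhds a.2.1) :=
          ((continuous_fst.comp continuous_snd).tendsto a).comp hconv
        have hy : Filter.Tendsto (fun n => (d (φ n)).2.2) Filter.atTop (nhds a.2.2) :=
          ((continuous_snd.comp continuous_snd).tendsto a).comp hconv
        exact hx.smul hy
      have hplus_lim : Filter.Tendsto (fun n => (u (φ n)).1 + (u (φ n)).2)
          Filter.atTop (nhds (p.1 + p.2)) :=
        ((hufst.comp hφtop).add (husnd.comp hφtop))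
      have hminus_lim : Filter.Tendsto (fun n => (u (φ n)).1 - (u (φ n)).2)
          Filter.atTop (nhds (p.1 - p.2)) :=
        ((hufst.comp hφtop).sub (husnd.comp hφtop))
      have heq1 : p.1 + p.2 = a.1.1 • a.1.2 := by
        refine tendsto_nhds_unique ?_ hlim1
        have : (fun n => (u (φ n)).1 + (u (φ n)).2)
            = fun n => (d (φ n)).1.1 • (d (φ n)).1.2 := by
          funext n; exact (hd (φ n)).1.2.2
        rw [← this]; exact hplus_lim
      have heq2 : p.1 - p.2 = a.2.1 • a.2.2 := by
        refine tendsto_nhds_unique ?_ hlim2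
        have : (fun n => (u (φ n)).1 - (u (φ n)).2)
            = fun n => (d (φ n)).2.1 • (d (φ n)).2.2 := by
          funext n; exact (hd (φ n)).2.2.2
        rw [← this]; exact hminus_lim
      exact ⟨⟨hq1, hq2, hq3,
        ⟨a.1.2, ha2, a.1.1, lt_of_lt_of_le hIccpos ha1.1, heq1⟩,
        ⟨a.2.2, ha4, a.2.1, lt_of_lt_of_le hIccpos ha3.1, heq2⟩⟩, hp1⟩
    · -- bounded
      rw [isBounded_iff_forall_norm_le]
      refine ⟨R₀ + 1/c, ?_⟩
      intro p hp
      obtain ⟨hpK, hpL⟩ := hp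
      obtain ⟨-, -, -, ⟨ν, hν, lam, hlam, hplus⟩, -⟩ := id hpK
      have hlamle : lam ≤ 1/c := (hlam_val p hpK hpL ν hν lam hlam (Or.inl hplus)).2
      have hp1 : ‖p.1‖ ≤ R₀ := hR₀ p.1 hpL
      have hp2 : ‖p.2‖ ≤ R₀ + 1/c := by
        have hform : p.2 = lam • ν - p.1 := by
          rw [← hplus]; abel
        rw [hform]
        calc ‖lam • ν - p.1‖ ≤ ‖lam • ν‖ + ‖p.1‖ := norm_sub_le _ _
          _ = |lam| * ‖ν‖ + ‖p.1‖ := by rw [norm_smul, Real.norm_eq_abs]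
          _ ≤ (1/c) * 1 + R₀ := by
              have h1 : |lam| = lam := abs_of_pos hlam
              have h2 := lam_norm_bound hAC hν
              have h3 := norm_nonneg ν
              nlinarith
          _ = R₀ + 1/c := by ring
      rw [Prod.norm_def]
      exact max_le (le_trans hp1 (le_add_of_nonneg_right (by positivity))) hp2
  · -- coverage
    ext p
    simp only [Set.mem_setOf_eq]
    constructor
    · rintro ⟨γ, hγ, p', hp', rfl⟩
      exact Ktilde_gamma_mem hΓ hγ hp'.1
    · intro hp
      have hx := Ktilde_fst_mem_core hp
      rw [← hL₀cover] at hx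
      simp only [Set.mem_iUnion] at hx
      obtain ⟨γ, hγ, y, hy, hyx⟩ := hx
      have hγinv : γ⁻¹ ∈ Γ := inv_mem hγ
      have hsymm : (γ⁻¹ : GL4) = γ.symm := rfl
      refine ⟨γ, hγ, ((γ⁻¹ : GL4) p.1, (γ⁻¹ : GL4) p.2), ⟨?_, ?_⟩, ?_⟩
      · exact Ktilde_gamma_mem hΓ hγinv hp
      · show (γ⁻¹ : GL4) p.1 ∈ L₀
        have : (γ⁻¹ : GL4) p.1 = y := by
          rw [hsymm, ← hyx]; exact γ.symm_apply_apply y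
        rw [this]; exact hy
      · have h1 : γ ((γ⁻¹ : GL4) p.1) = p.1 := by rw [hsymm]; exact γ.apply_symm_apply p.1
        have h2 : γ ((γ⁻¹ : GL4) p.2) = p.2 := by rw [hsymm]; exact γ.apply_symm_apply p.2
        simp only [h1, h2]
end
end
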